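/- Let Σ₀ be a d×d real symmetric positive definite matrix, let σ > 0, r > 0, and let A₀, …, A_{T−1} ∈ ℝᵈ satisfy ‖A_t‖₂ ≤ r for all t. Then log det(I_d + σ⁻² Σ₀ ∑_{t=0}^{T−1} A_t A_tᵀ) ≤ d log(1 + r² ‖Σ₀‖_op T / (d σ²)), where ‖Σ₀‖_op denotes the operator (largest-eigenvalue) norm of Σ₀. -/

import Mathlib

open Matrix
open scoped Matrix.Norms.L2Operator
open scoped MatrixOrder

lemma aux_trace_eq_sum_eigs {n : ℕ} {A : Matrix (Fin n) (Fin n) ℝ} (hA : A.IsHermitian) :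
    A.trace = ∑ i, hA.eigenvalues i := by
  conv_lhs => rw [hA.spectral_theorem]
  rw [Unitary.conjStarAlgAut_apply, trace_mul_cycle]
  rw [show (star (hA.eigenvectorUnitary : Matrix (Fin n) (Fin n) ℝ)) *
      (hA.eigenvectorUnitary : Matrix (Fin n) (Fin n) ℝ) = 1 from
    Unitary.star_mul_self_of_mem hA.eigenvectorUnitary.2]
  simp [trace_diagonal]

lemma aux_quad_le {d : ℕ} (S : Matrix (Fin d) (Fin d) ℝ) (a : Fin d → ℝ) :
    a ⬝ᵥ (S *ᵥ a) ≤ ‖S‖ * (a ⬝ᵥ a) := by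
  classical
  set x : EuclideanSpace ℝ (Fin d) := (EuclideanSpace.equiv (Fin d) ℝ).symm a with hx
  set y : EuclideanSpace ℝ (Fin d) := (EuclideanSpace.equiv (Fin d) ℝ).symm (S *ᵥ a) with hy
  have h1 : a ⬝ᵥ (S *ᵥ a) = inner ℝ x y := by
    simp [PiLp.inner_apply, dotProduct, RCLike.inner_apply, x, y, mul_comm]
  have h2 : (inner ℝ x y : ℝ) ≤ ‖x‖ * ‖y‖ := real_inner_le_norm x y
  have h3 : ‖y‖ ≤ ‖S‖ * ‖x‖ := S.l2_opNorm_mulVec x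
  have h4 : ‖x‖ * ‖x‖ = a ⬝ᵥ a := by
    rw [← real_inner_self_eq_norm_mul_norm]
    simp [PiLp.inner_apply, dotProduct, RCLike.inner_apply, x, EuclideanSpace.norm_sq_eq, Real.norm_eq_abs, sq_abs, ← pow_two]
  calc a ⬝ᵥ (S *ᵥ a) ≤ ‖x‖ * ‖y‖ := h1 ▸ h2
    _ ≤ ‖x‖ * (‖S‖ * ‖x‖) := mul_le_mul_of_nonneg_left h3 (norm_nonneg x)
    _ = ‖S‖ * (a ⬝ᵥ a) := by rw [← h4]; ring

lemma aux_trace_S_vecMulVec {d : ℕ} (S : Matrix (Fin d) (Fin d) ℝ) (a : Fin d → ℝ) :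
    (S * vecMulVec a a).trace = a ⬝ᵥ (S *ᵥ a) := by
  simp only [trace, diag_apply, mul_apply, vecMulVec_apply, dotProduct, mulVec]
  refine Finset.sum_congr rfl fun i _ => ?_
  simp only [dotProduct, Finset.mul_sum]
  refine Finset.sum_congr rfl fun j _ => ?_
  ring


/-- The log-determinant bound used to control term (I) in the regret analysis.
Here `‖S‖` is the `ℓ₂`-operator norm of `S = Σ₀` (its largest eigenvalue, as it
is symmetric positive definite). -/
theorem log_det_bound {d T : ℕ} (S : Matrix (Fin d) (Fin d) ℝ) (hS : S.PosDef)
    (σ r : ℝ) (hσ : 0 < σ) (hr : 0 < r)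
    (A : ℕ → Fin d → ℝ) (hA : ∀ t < T, Real.sqrt (A t ⬝ᵥ A t) ≤ r) :
    Real.log (1 + (σ ^ 2)⁻¹ •
        (S * ∑ t ∈ Finset.range T, vecMulVec (A t) (A t))).det ≤
      d * Real.log (1 + r ^ 2 * ‖S‖ * T / (d * σ ^ 2)) := by
  classical
  rcases Nat.eq_zero_or_pos d with hd | hd
  · subst hd
    simp [Matrix.det_isEmpty]
  set c : ℝ := (σ ^ 2)⁻¹ with hc
  have hcpos : 0 < c := by positivity
  set M : Matrix (Fin d) (Fin d) ℝ := ∑ t ∈ Finset.range T, vecMulVec (A t) (A t) with hMdef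
  -- M is PosSemidef
  have hvv : ∀ a : Fin d → ℝ, (vecMulVec a a).PosSemidef := by
    intro a
    have h : vecMulVec a a = (replicateRow (Fin 1) a)ᴴ * (replicateRow (Fin 1) a) := by
      ext i j; simp [vecMulVec_apply, mul_apply, mul_comm]
    rw [h]; exact posSemidef_conjTranspose_mul_self _
  have psd_add : ∀ X Y : Matrix (Fin d) (Fin d) ℝ,
      X.PosSemidef → Y.PosSemidef → (X + Y).PosSemidef := by
    intro X Y hX hY
    refine .of_dotProduct_mulVec_nonneg (hX.isHermitian.add hY.isHermitian) fun x => ?_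
    rw [add_mulVec, dotProduct_add]
    exact add_nonneg (hX.dotProduct_mulVec_nonneg x) (hY.dotProduct_mulVec_nonneg x)
  have hM : M.PosSemidef := by
    rw [hMdef]
    exact Finset.sum_induction _ _ psd_add Matrix.PosSemidef.zero fun t _ => hvv (A t)
  -- square root of S
  set B : Matrix (Fin d) (Fin d) ℝ := CFC.sqrt S with hBdef
  have hB : B.PosSemidef := (CFC.sqrt_nonneg S).posSemidef
  have hBB : B * B = S := CFC.sqrt_mul_sqrt_self S hS.posSemidef.nonneg
  -- the symmetrized matrix N
  set N : Matrix (Fin d) (Fin d) ℝ := c • (B * M * B) with hNdef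
  have hN : N.PosSemidef := by
    have h1 : (B * M * B).PosSemidef := by
      have := hM.conjTranspose_mul_mul_same B
      rwa [hB.isHermitian.eq] at this
    refine .of_dotProduct_mulVec_nonneg ?_ ?_
    · have : Nᴴ = N := by rw [hNdef, conjTranspose_smul, h1.isHermitian.eq]; simp
      exact this
    · intro x
      rw [hNdef, smul_mulVec, dotProduct_smul]
      exact mul_nonneg hcpos.le (h1.dotProduct_mulVec_nonneg x)
  set P : Matrix (Fin d) (Fin d) ℝ := 1 + N with hPdef
  have hP : P.PosSemidef := by
    refine .of_dotProduct_mulVec_nonneg ?_ ?_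
    · have : Pᴴ = P := by rw [hPdef, conjTranspose_add, hN.isHermitian.eq]; simp
      exact this
    · intro x
      rw [hPdef, add_mulVec, dotProduct_add, one_mulVec]
      have h1 : (0:ℝ) ≤ star x ⬝ᵥ x := dotProduct_star_self_nonneg x
      exact add_nonneg h1 (hN.dotProduct_mulVec_nonneg x)
  -- determinant identity
  have hdet : (1 + c • (S * M)).det = P.det := by
    have h1 : 1 + c • (S * M) = 1 + B * (c • (B * M)) := by
      rw [mul_smul_comm, ← mul_assoc, hBB]
    rw [h1, det_one_add_mul_comm, hPdef, hNdef, smul_mul, mul_assoc]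
  -- eigenvalues of P
  set lam : Fin d → ℝ := hP.isHermitian.eigenvalues with hlam
  have hlam_nonneg : ∀ i, 0 ≤ lam i := fun i => hP.eigenvalues_nonneg i
  have hdetP : P.det = ∏ i, lam i := by
    have := hP.isHermitian.det_eq_prod_eigenvalues
    simpa using this
  have htrP : P.trace = ∑ i, lam i := aux_trace_eq_sum_eigs hP.isHermitian
  -- trace bound
  have htau_le : (S * M).trace ≤ r ^ 2 * ‖S‖ * T := by
    rw [hMdef, Finset.mul_sum, trace_sum]
    have : ∀ t ∈ Finset.range T, (S * vecMulVec (A t) (A t)).trace ≤ ‖S‖ * r ^ 2 := by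
      intro t ht
      rw [aux_trace_S_vecMulVec]
      have h1 := aux_quad_le S (A t)
      have h2 : A t ⬝ᵥ A t ≤ r ^ 2 := by
        have hnn : 0 ≤ A t ⬝ᵥ A t := by
          simp only [dotProduct]
          exact Finset.sum_nonneg fun i _ => mul_self_nonneg _
        have := hA t (Finset.mem_range.mp ht)
        calc A t ⬝ᵥ A t = Real.sqrt (A t ⬝ᵥ A t) ^ 2 := (Real.sq_sqrt hnn).symm
          _ ≤ r ^ 2 := pow_le_pow_left₀ (Real.sqrt_nonneg _) this 2
      calc A t ⬝ᵥ (S *ᵥ A t) ≤ ‖S‖ * (A t ⬝ᵥ A t) := h1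
        _ ≤ ‖S‖ * r ^ 2 := mul_le_mul_of_nonneg_left h2 (norm_nonneg S)
    calc ∑ t ∈ Finset.range T, (S * vecMulVec (A t) (A t)).trace
        ≤ ∑ t ∈ Finset.range T, ‖S‖ * r ^ 2 := Finset.sum_le_sum this
      _ = r ^ 2 * ‖S‖ * T := by rw [Finset.sum_const, Finset.card_range, nsmul_eq_mul]; ring
  have htau_nonneg : 0 ≤ (S * M).trace := by
    rw [hMdef, Finset.mul_sum, trace_sum]
    refine Finset.sum_nonneg fun t _ => ?_
    rw [aux_trace_S_vecMulVec]
    have := hS.posSemidef.dotProduct_mulVec_nonneg (A t)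
    simpa using this
  -- trace of P
  have htrPval : P.trace = d + c * (S * M).trace := by
    rw [hPdef, trace_add, trace_one, hNdef, trace_smul]
    congr 1
    · simp
    · rw [smul_eq_mul]
      congr 1
      rw [trace_mul_cycle, hBB]
  -- AM-GM
  have hdpos : (0:ℝ) < d := Nat.cast_pos.mpr hd
  have hw : ∑ _i : Fin d, (d:ℝ)⁻¹ = 1 := by
    simp [Finset.sum_const]
    field_simp
  have hamgm := Real.geom_mean_le_arith_mean_weighted Finset.univ (fun _ => (d:ℝ)⁻¹) lam
    (fun i _ => by positivity) hw (fun i _ => hlam_nonneg i)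
  set m : ℝ := ∑ i, (d:ℝ)⁻¹ * lam i with hm
  have hmval : m = 1 + c * (S * M).trace / d := by
    rw [hm, ← Finset.mul_sum, ← htrP, htrPval]
    field_simp
  have hmpos : 0 < m := by
    rw [hmval]
    have : 0 ≤ c * (S * M).trace / d := by positivity
    linarith
  have hprod_le : P.det ≤ m ^ d := by
    rw [hdetP]
    have key : (∏ i, lam i ^ ((d:ℝ)⁻¹)) ^ (d:ℕ) = ∏ i, lam i := by
      rw [← Finset.prod_pow]
      refine Finset.prod_congr rfl fun i _ => ?_
      rw [← Real.rpow_natCast (lam i ^ ((d:ℝ)⁻¹)) d, ← Real.rpow_mul (hlam_nonneg i)]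
      rw [inv_mul_cancel₀ (ne_of_gt hdpos), Real.rpow_one]
    rw [← key]
    apply pow_le_pow_left₀ (Finset.prod_nonneg fun i _ => Real.rpow_nonneg (hlam_nonneg i) _) hamgm
  -- the RHS argument
  set K : ℝ := 1 + r ^ 2 * ‖S‖ * T / (d * σ ^ 2) with hK
  have hmK : m ≤ K := by
    rw [hmval, hK]
    have : c * (S * M).trace / d ≤ r ^ 2 * ‖S‖ * T / (d * σ ^ 2) := by
      rw [hc]
      rw [div_le_div_iff₀ hdpos (by positivity)]
      calc (σ ^ 2)⁻¹ * (S * M).trace * (d * σ ^ 2)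
          = (S * M).trace * d := by field_simp
        _ ≤ r ^ 2 * ‖S‖ * T * d := by
            apply mul_le_mul_of_nonneg_right htau_le hdpos.le
    linarith
  have hKpos : 0 < K := lt_of_lt_of_le hmpos hmK
  -- conclude
  rw [hdet]
  have hK1 : 0 ≤ Real.log K := by
    apply Real.log_nonneg
    rw [hK]
    have : 0 ≤ r ^ 2 * ‖S‖ * T / (d * σ ^ 2) := by positivity
    linarith
  rcases le_or_gt P.det 0 with hdet0 | hdetpos
  · have hz : P.det = 0 := le_antisymm hdet0
      (hdetP ▸ Finset.prod_nonneg fun i _ => hlam_nonneg i)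
    rw [hz, Real.log_zero]
    positivity
  · calc Real.log P.det ≤ Real.log (m ^ d) := Real.log_le_log hdetpos hprod_le
      _ = d * Real.log m := by rw [Real.log_pow]
      _ ≤ d * Real.log K := by
          apply mul_le_mul_of_nonneg_left (Real.log_le_log hmpos hmK) (by positivity)
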